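/- Let T be a mixed tree and a, b distinct vertices of T with no arc between them. Then the Kelmans transformation T_b^a is again a mixed tree if and only if either there is an undirected edge ab in T, or the distance between a and b in the underlying tree is 2 and the unique common neighbor x of a and b satisfies one of: (i) ax is an undirected edge, (ii) xb is an undirected edge, (iii) both a→x and b→x are arcs, or (iv) both x→a and x→b are arcs. -/

import Mathlib

attribute [local instance] Classical.propDecidable

/-- The spectral radius of a real square matrix: the maximum of the complex moduli
of its eigenvalues (roots of the characteristic polynomial over ℂ). -/
noncomputable def specRad {m : Type*} [Fintype m] [DecidableEq m] (M : Matrix m m ℝ) : ℝ :=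
  sSup {r : ℝ | ∃ μ : ℂ, (M.map (fun x => (x : ℂ))).charpoly.IsRoot μ ∧ r = ‖μ‖}

/-- The `A_α` matrix `α D⁺ + (1-α) A` of a mixed graph given by its adjacency matrix `A`,
where `D⁺` is the diagonal out-degree matrix. -/
noncomputable def Aalpha {n : ℕ} (α : ℝ) (A : Matrix (Fin n) (Fin n) ℝ) :
    Matrix (Fin n) (Fin n) ℝ :=
  α • Matrix.diagonal (fun i => ∑ j, A i j) + (1 - α) • A

/-- The Kelmans transformation of a mixed graph (given by its 0-1 adjacency matrix)
from `b` to `a`. -/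
noncomputable def kelmansG {n : ℕ} (A : Matrix (Fin n) (Fin n) ℝ) (a b : Fin n) :
    Matrix (Fin n) (Fin n) ℝ :=
  Matrix.of fun i j =>
    if i ≠ a ∧ i ≠ b ∧ j = a then max (A i a) (A i b)
    else if i ≠ a ∧ i ≠ b ∧ j = b then min (A i a) (A i b)
    else if i = a ∧ j ≠ a ∧ j ≠ b then max (A a j) (A b j)
    else if i = b ∧ j ≠ a ∧ j ≠ b then min (A a j) (A b j)
    else A i j

/-- `A` is the adjacency matrix of a mixed graph: a 0-1 matrix with zero diagonal. -/
def IsMixedAdj {n : ℕ} (A : Matrix (Fin n) (Fin n) ℝ) : Prop :=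
  (∀ i j, A i j = 0 ∨ A i j = 1) ∧ ∀ i, A i i = 0

/-- The underlying simple graph of a mixed graph: forget orientations. -/
def underlying {n : ℕ} (A : Matrix (Fin n) (Fin n) ℝ) : SimpleGraph (Fin n) where
  Adj u v := u ≠ v ∧ (A u v = 1 ∨ A v u = 1)
  symm := ⟨fun u v ⟨h1, h2⟩ => ⟨h1.symm, h2.symm⟩⟩
  loopless := ⟨fun u h => h.1 rfl⟩

/-- The graph of undirected edges of a mixed graph (delete all arcs). -/
def undirPart {n : ℕ} (A : Matrix (Fin n) (Fin n) ℝ) : SimpleGraph (Fin n) where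
  Adj u v := u ≠ v ∧ A u v = 1 ∧ A v u = 1
  symm := ⟨fun u v ⟨h1, h2, h3⟩ => ⟨h1.symm, h3, h2⟩⟩
  loopless := ⟨fun u h => h.1 rfl⟩

section Adj

variable {n : ℕ} {A : Matrix (Fin n) (Fin n) ℝ} {a b : Fin n}

lemma underlying_adj {u v : Fin n} :
    (underlying A).Adj u v ↔ u ≠ v ∧ (A u v = 1 ∨ A v u = 1) := Iff.rfl

variable (hab : a ≠ b)
include hab

lemma kel_ia {i : Fin n} (hi : i ≠ a) (hib : i ≠ b) :
    kelmansG A a b i a = max (A i a) (A i b) := by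
  simp [kelmansG, hi, hib]

lemma kel_ib {i : Fin n} (hi : i ≠ a) (hib : i ≠ b) :
    kelmansG A a b i b = min (A i a) (A i b) := by
  simp [kelmansG, hi, hib, hab, hab.symm]

lemma kel_aj {j : Fin n} (hj : j ≠ a) (hjb : j ≠ b) :
    kelmansG A a b a j = max (A a j) (A b j) := by
  simp [kelmansG, hj, hjb, hab]

lemma kel_bj {j : Fin n} (hj : j ≠ a) (hjb : j ≠ b) :
    kelmansG A a b b j = min (A a j) (A b j) := by
  simp [kelmansG, hj, hjb, hab, hab.symm]

lemma kel_ab : kelmansG A a b a b = A a b := by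
  simp [kelmansG, hab, hab.symm]

lemma kel_ba : kelmansG A a b b a = A b a := by
  simp [kelmansG, hab, hab.symm]

lemma kel_mid {i j : Fin n} (hi : i ≠ a) (hib : i ≠ b) (hj : j ≠ a) (hjb : j ≠ b) :
    kelmansG A a b i j = A i j := by
  simp [kelmansG, hi, hib, hj, hjb]

variable (hA : IsMixedAdj A)
include hA

lemma kadj_mid {i j : Fin n} (hi : i ≠ a) (hib : i ≠ b) (hj : j ≠ a) (hjb : j ≠ b) :
    (underlying (kelmansG A a b)).Adj i j ↔ (underlying A).Adj i j := by
  rw [underlying_adj, underlying_adj, kel_mid hab hi hib hj hjb, kel_mid hab hj hjb hi hib]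

lemma kadj_ia {i : Fin n} (hi : i ≠ a) (hib : i ≠ b) :
    (underlying (kelmansG A a b)).Adj i a ↔
      (underlying A).Adj i a ∨ (underlying A).Adj i b := by
  rw [underlying_adj, underlying_adj, underlying_adj, kel_ia hab hi hib, kel_aj hab hi hib]
  rcases hA.1 i a with h1 | h1 <;> rcases hA.1 i b with h2 | h2 <;>
    rcases hA.1 a i with h3 | h3 <;> rcases hA.1 b i with h4 | h4 <;>
    simp [h1, h2, h3, h4, hi, hib, max_def]

lemma kadj_ib {i : Fin n} (hi : i ≠ a) (hib : i ≠ b) :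
    (underlying (kelmansG A a b)).Adj i b ↔
      (A i a = 1 ∧ A i b = 1) ∨ (A a i = 1 ∧ A b i = 1) := by
  rw [underlying_adj, kel_ib hab hi hib, kel_bj hab hi hib]
  rcases hA.1 i a with h1 | h1 <;> rcases hA.1 i b with h2 | h2 <;>
    rcases hA.1 a i with h3 | h3 <;> rcases hA.1 b i with h4 | h4 <;>
    simp [h1, h2, h3, h4, hi, hib, min_def]

lemma kadj_ab : (underlying (kelmansG A a b)).Adj a b ↔ (underlying A).Adj a b := by
  rw [underlying_adj, underlying_adj, kel_ab hab, kel_ba hab]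

end Adj

open SimpleGraph Finset

section Generic
variable {V : Type*} [Fintype V]

lemma aux_card_le_edge (G : SimpleGraph V) [Fintype G.edgeSet]
    (hc : G.Connected) : Fintype.card V ≤ G.edgeFinset.card + 1 := by
  classical
  obtain ⟨r⟩ := hc.nonempty
  have key : ∀ v : V, v ≠ r → ∃ u, G.Adj v u ∧ G.dist u r < G.dist v r := by
    intro v hv
    obtain ⟨p, hp⟩ := hc.exists_walk_length_eq_dist v r
    cases p with
    | nil => exact absurd rfl hv
    | cons h q =>
      refine ⟨_, h, ?_⟩
      have h1 : G.dist _ r ≤ q.length := SimpleGraph.dist_le q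
      simp only [SimpleGraph.Walk.length_cons] at hp
      omega
  choose f hf1 hf2 using key
  have hinj : Set.InjOn (fun v => if h : v = r then (s(v, v)) else s(v, f v h))
      (Finset.univ.erase r : Finset V) := by
    intro x hx y hy hxy
    have hx' : x ≠ r := by simpa using hx
    have hy' : y ≠ r := by simpa using hy
    simp only [dif_neg hx', dif_neg hy', Sym2.eq_iff, Sym2.mk_eq_mk_iff, Prod.mk.injEq, Prod.swap_prod_mk] at hxy
    rcases hxy with ⟨h1, h2⟩ | ⟨h1, h2⟩
    · exact h1
    · exfalso
      have hx2 := hf2 x hx'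
      have hy2 := hf2 y hy'
      rw [h2] at hx2
      rw [← h1] at hy2
      omega
  have hmaps : ∀ v ∈ (Finset.univ.erase r : Finset V),
      (if h : v = r then (s(v, v)) else s(v, f v h)) ∈ G.edgeFinset := by
    intro v hv
    have hv' : v ≠ r := by simpa using hv
    rw [dif_neg hv']
    simp only [SimpleGraph.mem_edgeFinset, SimpleGraph.mem_edgeSet]
    exact hf1 v hv'
  have := Finset.card_le_card_of_injOn _ hmaps hinj
  have hcard : (Finset.univ.erase r : Finset V).card = Fintype.card V - 1 := by
    simp [Finset.card_erase_of_mem]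
  have hpos : 0 < Fintype.card V := Fintype.card_pos_iff.mpr ⟨r⟩
  omega

lemma aux_isTree_of_card (G : SimpleGraph V) [Fintype G.edgeSet]
    (hc : G.Connected) (hcard : G.edgeFinset.card + 1 ≤ Fintype.card V) : G.IsTree := by
  classical
  refine ⟨hc, ?_⟩
  by_contra hcyc
  rw [SimpleGraph.isAcyclic_iff_forall_adj_isBridge] at hcyc
  push_neg at hcyc
  obtain ⟨v, w, hadj, hbr⟩ := hcyc
  rw [SimpleGraph.isBridge_iff] at hbr
  push_neg at hbr
  have hr : (G \ SimpleGraph.fromEdgeSet {s(v, w)}).Reachable v w := hbr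
  set G2 := G \ SimpleGraph.fromEdgeSet {s(v, w)} with hG2
  have hstep : ∀ x y : V, G.Adj x y → G2.Reachable x y := by
    intro x y hxy
    by_cases he : s(x, y) = s(v, w)
    · rw [Sym2.eq_iff] at he
      rcases he with ⟨h1, h2⟩ | ⟨h1, h2⟩
      · subst h1; subst h2; exact hr
      · subst h1; subst h2; exact hr.symm
    · exact SimpleGraph.Adj.reachable (by
        rw [hG2, SimpleGraph.sdiff_adj, SimpleGraph.fromEdgeSet_adj]
        exact ⟨hxy, fun hmem => he (by simpa using hmem.1)⟩)
  have hc2 : G2.Connected := by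
    rw [SimpleGraph.connected_iff]
    refine ⟨fun x y => ?_, hc.nonempty⟩
    obtain ⟨p⟩ := hc.preconnected x y
    induction p with
    | nil => exact SimpleGraph.Reachable.refl _
    | cons h q ih => exact (hstep _ _ h).trans ih
  have hedge : G2.edgeFinset = G.edgeFinset.erase s(v, w) := by
    ext e
    simp only [SimpleGraph.mem_edgeFinset, Finset.mem_erase, hG2, SimpleGraph.edgeSet_sdiff,
      SimpleGraph.edgeSet_fromEdgeSet, Set.mem_diff, Set.mem_setOf_eq,
      Set.mem_singleton_iff]
    constructor
    · rintro ⟨he, hne⟩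
      refine ⟨fun h => hne ⟨h, ?_⟩, he⟩
      rw [h]
      simp [hadj.ne]
    · rintro ⟨hne, he⟩
      exact ⟨he, fun h => hne h.1⟩
  have hmem : s(v, w) ∈ G.edgeFinset := by
    simp [SimpleGraph.mem_edgeFinset, hadj]
  have h2 := aux_card_le_edge G2 hc2
  rw [hedge, Finset.card_erase_of_mem hmem] at h2
  have hpos : 0 < G.edgeFinset.card := Finset.card_pos.mpr ⟨_, hmem⟩
  omega

end Generic

section TreeFacts
variable {V : Type*} {G : SimpleGraph V} {a b x y : V}

lemma aux_common_unique (hG : G.IsTree) (hab : a ≠ b)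
    (h1 : G.Adj a x) (h2 : G.Adj x b) (h3 : G.Adj a y) (h4 : G.Adj y b) : x = y := by
  have hu := (SimpleGraph.isTree_iff_existsUnique_path.mp hG).2 a b
  have hp1 : (Walk.cons h1 (Walk.cons h2 Walk.nil)).IsPath := by
    simp [Walk.isPath_def, h1.ne, h2.ne, hab]
  have hp2 : (Walk.cons h3 (Walk.cons h4 Walk.nil)).IsPath := by
    simp [Walk.isPath_def, h3.ne, h4.ne, hab]
  have := (hu.unique hp1 hp2)
  have hsup := congrArg Walk.support this
  simpa using hsup

lemma aux_no_common (hG : G.IsTree) (hadj : G.Adj a b)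
    (h1 : G.Adj a x) (h2 : G.Adj x b) : False := by
  have hu := (SimpleGraph.isTree_iff_existsUnique_path.mp hG).2 a b
  have hp1 : (Walk.cons h1 (Walk.cons h2 Walk.nil)).IsPath := by
    simp [Walk.isPath_def, h1.ne, h2.ne, hadj.ne]
  have hp2 : (Walk.cons hadj Walk.nil).IsPath := by
    simp [Walk.isPath_def, hadj.ne]
  have := (hu.unique hp1 hp2)
  have hlen := congrArg Walk.length this
  simp at hlen

lemma aux_dist_two (hc : G.Connected) (hnadj : ¬G.Adj a b) (hab : a ≠ b)
    (h1 : G.Adj a x) (h2 : G.Adj x b) : G.dist a b = 2 := by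
  have hle : G.dist a b ≤ 2 := by
    have := SimpleGraph.dist_le (Walk.cons h1 (Walk.cons h2 Walk.nil))
    simpa using this
  have h0 : G.dist a b ≠ 0 := fun h => hab (hc.dist_eq_zero_iff.mp h)
  have hone : G.dist a b ≠ 1 := fun h => hnadj (SimpleGraph.dist_eq_one_iff_adj.mp h)
  omega

end TreeFacts

section Master

variable {n : ℕ} {A : Matrix (Fin n) (Fin n) ℝ} {a b : Fin n}

lemma master (hA : IsMixedAdj A) (htree : (underlying A).IsTree) (hab : a ≠ b)
    (c : Fin n)
    (Hc1 : (underlying A).Adj c b)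
    (Hc3 : (underlying (kelmansG A a b)).Adj c b)
    (Hc5 : (underlying A).Adj a b → a = c)
    (Hc6 : (underlying A).Adj a c ∨ c = a)
    (Hcom : ∀ i, (underlying A).Adj i a → (underlying A).Adj i b → i = c) :
    (underlying (kelmansG A a b)).IsTree := by
  classical
  set T := underlying A with hT
  set G' := underlying (kelmansG A a b) with hG'
  have hcb : c ≠ b := Hc1.ne
  -- connectivity
  have hreach_ab : G'.Reachable a b := by
    by_cases hca : c = a
    · subst hca; exact Hc3.reachable
    · have h1 : G'.Adj c a := (kadj_ia hab hA hca hcb).mpr (Or.inr Hc1)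
      exact (h1.symm.reachable).trans Hc3.reachable
  have hstep : ∀ u v : Fin n, T.Adj u v → G'.Reachable u v := by
    intro u v huv
    by_cases hua : u = a
    · rw [hua] at huv ⊢
      by_cases hvb : v = b
      · rw [hvb]; exact hreach_ab
      · have hva : v ≠ a := fun h => huv.ne h.symm
        exact ((kadj_ia hab hA hva hvb).mpr (Or.inl huv.symm)).symm.reachable
    · by_cases hub : u = b
      · rw [hub] at huv ⊢
        by_cases hva : v = a
        · rw [hva]; exact hreach_ab.symm
        · have hvb : v ≠ b := fun h => huv.ne h.symm
          exact hreach_ab.symm.trans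
            ((kadj_ia hab hA hva hvb).mpr (Or.inr huv.symm)).symm.reachable
      · -- u ∉ {a,b}
        by_cases hva : v = a
        · rw [hva] at huv ⊢
          exact ((kadj_ia hab hA hua hub).mpr (Or.inl huv)).reachable
        · by_cases hvb : v = b
          · rw [hvb] at huv ⊢
            exact (((kadj_ia hab hA hua hub).mpr (Or.inr huv)).reachable).trans
              hreach_ab
          · exact ((kadj_mid hab hA hua hub hva hvb).mpr huv).reachable
  have hconn : G'.Connected := by
    rw [SimpleGraph.connected_iff]
    refine ⟨fun u v => ?_, htree.isConnected.nonempty⟩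
    obtain ⟨p⟩ := htree.isConnected.preconnected u v
    induction p with
    | nil => exact Reachable.refl _
    | cons h q ih => exact (hstep _ _ h).trans ih
  -- edge counting via a bijection
  set f : Fin n → Fin n := fun v => if v = b then a else v with hf
  have hfb : f b = a := by simp [hf]
  have hfa : f a = a := by simp [hf, hab]
  have hfid : ∀ w, w ≠ b → f w = w := by intro w hw; simp [hf, hw]
  have hf_nb : ∀ w, f w ≠ b := by
    intro w
    by_cases h : w = b <;> simp [hf, h, hab]
  have hf_eq : ∀ u w : Fin n, f u = f w ↔ (u = w ∨ (u = a ∧ w = b) ∨ (u = b ∧ w = a)) := by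
    intro u w
    constructor
    · intro h
      by_cases hu : u = b
      · by_cases hw : w = b
        · exact Or.inl (hu.trans hw.symm)
        · rw [hu, hfb, hfid w hw] at h
          exact Or.inr (Or.inr ⟨hu, h.symm⟩)
      · by_cases hw : w = b
        · rw [hw, hfb, hfid u hu] at h
          exact Or.inr (Or.inl ⟨h, hw⟩)
        · rw [hfid u hu, hfid w hw] at h
          exact Or.inl h
    · intro h
      rcases h with h | ⟨h1, h2⟩ | ⟨h1, h2⟩
      · rw [h]
      · rw [h1, h2, hfa, hfb]
      · rw [h1, h2, hfa, hfb]
  set sp : Sym2 (Fin n) := s(c, b) with hsp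
  set φ : Sym2 (Fin n) → Sym2 (Fin n) := fun e => if e = sp then e else Sym2.map f e with hφ
  have key : ∀ u1 v1 u2 v2 : Fin n, T.Adj u1 v1 → T.Adj u2 v2 →
      s(u1, v1) ≠ sp → s(u2, v2) ≠ sp → f u1 = f u2 → f v1 = f v2 →
      s(u1, v1) = s(u2, v2) := by
    intro u1 v1 u2 v2 he1 he2 hs1 hs2 h1 h2
    rw [hf_eq] at h1 h2
    rcases h1 with h1 | ⟨hu1, hu2⟩ | ⟨hu1, hu2⟩
    · rcases h2 with h2 | ⟨hv1, hv2⟩ | ⟨hv1, hv2⟩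
      · rw [h1, h2]
      · exfalso
        rw [h1, hv1] at he1
        rw [hv2] at he2
        have hc := Hcom u2 he1 he2
        rw [hv2, hc] at hs2
        exact hs2 hsp.symm
      · exfalso
        rw [h1, hv1] at he1
        rw [hv2] at he2
        have hc := Hcom u2 he2 he1
        rw [h1, hv1, hc] at hs1
        exact hs1 hsp.symm
    · rcases h2 with h2 | ⟨hv1, hv2⟩ | ⟨hv1, hv2⟩
      · exfalso
        rw [hu1, h2] at he1
        rw [hu2] at he2
        have hc := Hcom v2 he1.symm he2.symm
        rw [hu2, hc] at hs2
        exact hs2 (Sym2.eq_swap.trans hsp.symm)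
      · exfalso
        rw [hu1, hv1] at he1
        exact he1.ne rfl
      · exfalso
        rw [hu1, hv1] at he1
        have hac := Hc5 he1
        rw [hu1, hv1, hac] at hs1
        exact hs1 hsp.symm
    · rcases h2 with h2 | ⟨hv1, hv2⟩ | ⟨hv1, hv2⟩
      · exfalso
        rw [hu1, h2] at he1
        rw [hu2] at he2
        have hc := Hcom v2 he2.symm he1.symm
        rw [hu1, h2, hc] at hs1
        exact hs1 (Sym2.eq_swap.trans hsp.symm)
      · exfalso
        rw [hu2, hv2] at he2
        have hac := Hc5 he2
        rw [hu2, hv2, hac] at hs2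
        exact hs2 hsp.symm
      · exfalso
        rw [hu1, hv1] at he1
        exact he1.ne rfl
  have hcard : T.edgeFinset.card = G'.edgeFinset.card := by
    apply Finset.card_bij (fun e _ => φ e)
    · -- maps to
      intro e he
      induction e using Sym2.ind with
      | _ u v =>
      rw [SimpleGraph.mem_edgeFinset, SimpleGraph.mem_edgeSet] at he
      by_cases hspc : s(u, v) = sp
      · simp only [hφ, if_pos hspc]
        rw [hspc, hsp, SimpleGraph.mem_edgeFinset, SimpleGraph.mem_edgeSet]
        exact Hc3
      · simp only [hφ, if_neg hspc, Sym2.map_pair_eq]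
        rw [SimpleGraph.mem_edgeFinset, SimpleGraph.mem_edgeSet]
        by_cases hub : u = b
        · have hvb : v ≠ b := fun h => he.ne (hub.trans h.symm)
          by_cases hva : v = a
          · exfalso
            rw [hub, hva] at he
            have hac := Hc5 he.symm
            apply hspc
            rw [hub, hva, hac]
            exact Sym2.eq_swap.trans hsp.symm
          · rw [hub] at he
            rw [hub, hfb, hfid v hvb]
            exact ((kadj_ia hab hA hva hvb).mpr (Or.inr he.symm)).symm
        · by_cases hvb : v = b
          · by_cases hua : u = a
            · exfalso
              rw [hua, hvb] at he
              have hac := Hc5 he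
              apply hspc
              rw [hua, hvb, hac]
            · rw [hvb] at he
              rw [hvb, hfb, hfid u hub]
              exact (kadj_ia hab hA hua hub).mpr (Or.inr he)
          · rw [hfid u hub, hfid v hvb]
            by_cases hua : u = a
            · rw [hua] at he ⊢
              have hva : v ≠ a := fun h => he.ne h.symm
              exact ((kadj_ia hab hA hva hvb).mpr (Or.inl he.symm)).symm
            · by_cases hva : v = a
              · rw [hva] at he ⊢
                exact (kadj_ia hab hA hua hub).mpr (Or.inl he)
              · exact (kadj_mid hab hA hua hub hva hvb).mpr he
    · -- injective
      intro e1 he1 e2 he2 heq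
      induction e1 using Sym2.ind with
      | _ u1 v1 =>
      induction e2 using Sym2.ind with
      | _ u2 v2 =>
      rw [SimpleGraph.mem_edgeFinset, SimpleGraph.mem_edgeSet] at he1 he2
      by_cases hs1 : s(u1, v1) = sp
      · by_cases hs2 : s(u2, v2) = sp
        · rw [hs1, hs2]
        · exfalso
          simp only [hφ, if_pos hs1, if_neg hs2, Sym2.map_pair_eq] at heq
          rw [hs1, hsp, Sym2.eq_iff] at heq
          rcases heq with ⟨_, hb⟩ | ⟨_, hb⟩ <;> exact hf_nb _ hb.symm
      · by_cases hs2 : s(u2, v2) = sp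
        · exfalso
          simp only [hφ, if_neg hs1, if_pos hs2, Sym2.map_pair_eq] at heq
          rw [hs2, hsp, Sym2.eq_iff] at heq
          rcases heq with ⟨_, hb⟩ | ⟨hb, _⟩ <;> exact hf_nb _ hb
        · simp only [hφ, if_neg hs1, if_neg hs2, Sym2.map_pair_eq] at heq
          rw [Sym2.eq_iff] at heq
          rcases heq with ⟨h1, h2⟩ | ⟨h1, h2⟩
          · exact key u1 v1 u2 v2 he1 he2 hs1 hs2 h1 h2
          · have hs2' : s(v2, u2) ≠ sp := fun h => hs2 (Sym2.eq_swap.trans h)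
            exact (key u1 v1 v2 u2 he1 he2.symm hs1 hs2' h1 h2).trans Sym2.eq_swap
    · -- surjective
      intro e' he'
      induction e' using Sym2.ind with
      | _ u v =>
      rw [SimpleGraph.mem_edgeFinset, SimpleGraph.mem_edgeSet] at he'
      by_cases hs : s(u, v) = sp
      · refine ⟨s(c, b), ?_, ?_⟩
        · rw [SimpleGraph.mem_edgeFinset, SimpleGraph.mem_edgeSet]
          exact Hc1
        · simp only [hφ, if_pos hsp.symm]
          exact (hs.trans hsp).symm
      · have hub : u ≠ b := by
          intro h
          rw [h] at he'
          by_cases hva : v = a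
          · rw [hva] at he'
            have hT := (kadj_ab hab hA).mp he'.symm
            have hac := Hc5 hT
            apply hs
            rw [h, hva, hac]
            exact Sym2.eq_swap.trans hsp.symm
          · have hvb : v ≠ b := (he'.ne).symm
            have hC := (kadj_ib hab hA hva hvb).mp he'.symm
            have hva' : T.Adj v a := by
              rcases hC with ⟨h1, _⟩ | ⟨h1, _⟩
              · exact ⟨hva, Or.inl h1⟩
              · exact ⟨hva, Or.inr h1⟩
            have hvb' : T.Adj v b := by
              rcases hC with ⟨_, h2⟩ | ⟨_, h2⟩
              · exact ⟨hvb, Or.inl h2⟩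
              · exact ⟨hvb, Or.inr h2⟩
            have hvc := Hcom v hva' hvb'
            apply hs
            rw [h, hvc]
            exact Sym2.eq_swap.trans hsp.symm
        have hvb : v ≠ b := by
          intro h
          rw [h] at he'
          by_cases hua : u = a
          · rw [hua] at he'
            have hT := (kadj_ab hab hA).mp he'
            have hac := Hc5 hT
            apply hs
            rw [h, hua, hac]
          · have hC := (kadj_ib hab hA hua hub).mp he'
            have hua' : T.Adj u a := by
              rcases hC with ⟨h1, _⟩ | ⟨h1, _⟩
              · exact ⟨hua, Or.inl h1⟩
              · exact ⟨hua, Or.inr h1⟩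
            have hub' : T.Adj u b := by
              rcases hC with ⟨_, h2⟩ | ⟨_, h2⟩
              · exact ⟨hub, Or.inl h2⟩
              · exact ⟨hub, Or.inr h2⟩
            have huc := Hcom u hua' hub'
            apply hs
            rw [h, huc]
        by_cases hua : u = a
        · have hva : v ≠ a := fun h => he'.ne (hua.trans h.symm)
          rw [hua] at he'
          have hor := (kadj_ia hab hA hva hvb).mp he'.symm
          by_cases hta : T.Adj v a
          · refine ⟨s(a, v), ?_, ?_⟩
            · rw [SimpleGraph.mem_edgeFinset, SimpleGraph.mem_edgeSet]
              exact hta.symm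
            · have hns : s(a, v) ≠ sp := by
                simp only [hsp, ne_eq, Sym2.eq_iff]
                rintro (⟨_, h2⟩ | ⟨h1, _⟩)
                · exact hvb h2
                · exact hab h1
              simp only [hφ, if_neg hns, Sym2.map_pair_eq, hfa, hfid v hvb]
              rw [hua]
          · have htb : T.Adj v b := hor.resolve_left hta
            refine ⟨s(v, b), ?_, ?_⟩
            · rw [SimpleGraph.mem_edgeFinset, SimpleGraph.mem_edgeSet]
              exact htb
            · have hns : s(v, b) ≠ sp := by
                simp only [hsp, ne_eq, Sym2.eq_iff]
                rintro (⟨h1, _⟩ | ⟨h1, h2⟩)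
                · rcases Hc6 with h | h
                  · rw [h1] at hta
                    exact hta (h.symm)
                  · rw [h1] at hva
                    exact hva h
                · exact hvb h1
              simp only [hφ, if_neg hns, Sym2.map_pair_eq, hfb, hfid v hvb]
              rw [hua]
              exact Sym2.eq_swap
        · by_cases hva : v = a
          · rw [hva] at he'
            have hor := (kadj_ia hab hA hua hub).mp he'
            by_cases hta : T.Adj u a
            · refine ⟨s(u, a), ?_, ?_⟩
              · rw [SimpleGraph.mem_edgeFinset, SimpleGraph.mem_edgeSet]
                exact hta
              · have hns : s(u, a) ≠ sp := by
                  simp only [hsp, ne_eq, Sym2.eq_iff]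
                  rintro (⟨_, h2⟩ | ⟨h1, _⟩)
                  · exact hab h2
                  · exact hub h1
                simp only [hφ, if_neg hns, Sym2.map_pair_eq, hfa, hfid u hub]
                rw [hva]
            · have htb : T.Adj u b := hor.resolve_left hta
              refine ⟨s(u, b), ?_, ?_⟩
              · rw [SimpleGraph.mem_edgeFinset, SimpleGraph.mem_edgeSet]
                exact htb
              · have hns : s(u, b) ≠ sp := by
                  simp only [hsp, ne_eq, Sym2.eq_iff]
                  rintro (⟨h1, _⟩ | ⟨h1, h2⟩)
                  · rcases Hc6 with h | h
                    · rw [h1] at hta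
                      exact hta h.symm
                    · rw [h1] at hua
                      exact hua h
                  · exact hub h1
                simp only [hφ, if_neg hns, Sym2.map_pair_eq, hfb, hfid u hub]
                rw [hva]
          · have hT := (kadj_mid hab hA hua hub hva hvb).mp he'
            refine ⟨s(u, v), ?_, ?_⟩
            · rw [SimpleGraph.mem_edgeFinset, SimpleGraph.mem_edgeSet]
              exact hT
            · have hns : s(u, v) ≠ sp := by
                simp only [hsp, ne_eq, Sym2.eq_iff]
                rintro (⟨_, h2⟩ | ⟨h1, _⟩)
                · exact hvb h2
                · exact hub h1
              simp only [hφ, if_neg hns, Sym2.map_pair_eq, hfid u hub, hfid v hvb]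
  have hcT : T.edgeFinset.card + 1 = Fintype.card (Fin n) := htree.card_edgeFinset
  apply aux_isTree_of_card _ hconn
  rw [← hcard]
  omega

end Master

/-- Characterization of when the Kelmans transformation of a mixed tree is again a
mixed tree: either `ab` is an undirected edge, or `a` and `b` are at distance `2` and the
common neighbor `x` satisfies one of the four listed conditions. -/
theorem kelmansG_isTree_iff {n : ℕ} (A : Matrix (Fin n) (Fin n) ℝ) (hA : IsMixedAdj A)
    (htree : (underlying A).IsTree) (a b : Fin n) (hab : a ≠ b)
    (hnoarc : A a b = A b a) :
    (underlying (kelmansG A a b)).IsTree ↔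
      ((A a b = 1 ∧ A b a = 1) ∨
       ((underlying A).dist a b = 2 ∧
        ∃ x : Fin n, (underlying A).Adj a x ∧ (underlying A).Adj x b ∧
          ((A a x = 1 ∧ A x a = 1) ∨
           (A x b = 1 ∧ A b x = 1) ∨
           (A a x = 1 ∧ A x a = 0 ∧ A b x = 1 ∧ A x b = 0) ∨
           (A x a = 1 ∧ A a x = 0 ∧ A x b = 1 ∧ A b x = 0)))) := by
  classical
  set T := underlying A with hT
  set G' := underlying (kelmansG A a b) with hG'
  have h01 : ∀ i j, A i j ≠ 1 → A i j = 0 := fun i j h => (hA.1 i j).resolve_right h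
  constructor
  · intro hK
    obtain ⟨p⟩ := hK.isConnected.preconnected b a
    cases p with
    | nil => exact absurd rfl hab.symm
    | cons hadj q =>
      rename_i w
      by_cases hab1 : A a b = 1
      · exact Or.inl ⟨hab1, hnoarc ▸ hab1⟩
      · have hab0 : A a b = 0 := h01 _ _ hab1
        have hba0 : A b a = 0 := hnoarc ▸ hab0
        have hnadjT : ¬T.Adj a b := by
          rintro ⟨-, h | h⟩
          · rw [hab0] at h; norm_num at h
          · rw [hba0] at h; norm_num at h
        have hwb : w ≠ b := fun h => hadj.ne h.symm
        have hwa : w ≠ a := by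
          intro h
          rw [h] at hadj
          exact hnadjT ((kadj_ab hab hA).mp hadj.symm)
        have hC := (kadj_ib hab hA hwa hwb).mp hadj.symm
        have hTwa : T.Adj w a := by
          rcases hC with ⟨h1, _⟩ | ⟨h1, _⟩
          · exact ⟨hwa, Or.inl h1⟩
          · exact ⟨hwa, Or.inr h1⟩
        have hTwb : T.Adj w b := by
          rcases hC with ⟨_, h2⟩ | ⟨_, h2⟩
          · exact ⟨hwb, Or.inl h2⟩
          · exact ⟨hwb, Or.inr h2⟩
        refine Or.inr ⟨aux_dist_two htree.isConnected hnadjT hab hTwa.symm hTwb, w,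
          hTwa.symm, hTwb, ?_⟩
        rcases hC with ⟨h1, h2⟩ | ⟨h1, h2⟩
        · by_cases haw : A a w = 1
          · exact Or.inl ⟨haw, h1⟩
          · by_cases hbw : A b w = 1
            · exact Or.inr (Or.inl ⟨h2, hbw⟩)
            · exact Or.inr (Or.inr (Or.inr ⟨h1, h01 _ _ haw, h2, h01 _ _ hbw⟩))
        · by_cases hwa1 : A w a = 1
          · exact Or.inl ⟨h1, hwa1⟩
          · by_cases hwb1 : A w b = 1
            · exact Or.inr (Or.inl ⟨hwb1, h2⟩)
            · exact Or.inr (Or.inr (Or.inl ⟨h1, h01 _ _ hwa1, h2, h01 _ _ hwb1⟩))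
  · rintro (⟨h1, h2⟩ | ⟨hdist, x, hax, hxb, hfour⟩)
    · have hTab : T.Adj a b := ⟨hab, Or.inl h1⟩
      exact master hA htree hab a hTab ((kadj_ab hab hA).mpr hTab) (fun _ => rfl)
        (Or.inr rfl)
        (fun i hia hib => (aux_no_common htree hTab hia.symm hib).elim)
    · have hnadjT : ¬T.Adj a b := by
        intro h
        have := SimpleGraph.dist_eq_one_iff_adj.mpr h
        rw [hdist] at this
        norm_num at this
      have hxa : x ≠ a := fun h => hax.ne h.symm
      have hxbne : x ≠ b := hxb.ne
      have hC : (A x a = 1 ∧ A x b = 1) ∨ (A a x = 1 ∧ A b x = 1) := by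
        rcases hfour with ⟨hax1, hxa1⟩ | ⟨hxb1, hbx1⟩ | ⟨hax1, _, hbx1, _⟩ |
          ⟨hxa1, _, hxb1, _⟩
        · rcases hxb.2 with h | h
          · exact Or.inl ⟨hxa1, h⟩
          · exact Or.inr ⟨hax1, h⟩
        · rcases hax.2 with h | h
          · exact Or.inr ⟨h, hbx1⟩
          · exact Or.inl ⟨h, hxb1⟩
        · exact Or.inr ⟨hax1, hbx1⟩
        · exact Or.inl ⟨hxa1, hxb1⟩
      exact master hA htree hab x hxb ((kadj_ib hab hA hxa hxbne).mpr hC)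
        (fun h => absurd h hnadjT) (Or.inl hax)
        (fun i hia hib => aux_common_unique htree hab hia.symm hib hax hxb)
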